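/- Suppose rank(X) = n and the outputs are generated noise-free as y_t = ⟨x_t, θ^o⟩ + f_t for all t ∈ 𝕀, for some θ^o ∈ ℝ^n and f = (f_1, …, f_N) ∈ ℝ^N. If the number of zero entries of f satisfies |{t ∈ 𝕀 : f_t = 0}| ≥ (N + ν_n(X))/2, then θ^o is the unique minimizer of the ℓ0 objective: for every θ ≠ θ^o, ‖φ(θ^o)‖₀ < ‖φ(θ)‖₀. -/

import Mathlib

open Matrix Finset

/-- The `n × |S|` submatrix of the regressor matrix `X` formed by the columns
(regressors) indexed by the finite set `S`. -/
noncomputable def colSub (n N : ℕ) (x : Fin N → Fin n → ℝ) (S : Finset (Fin N)) :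
    Matrix (Fin n) {t // t ∈ S} ℝ :=
  Matrix.of fun i t => x t.1 i

/-- `ν_n(X)`: the smallest integer `m` such that every `n × m` submatrix of
columns of `X` has rank `n`. -/
noncomputable def nuX (n N : ℕ) (x : Fin N → Fin n → ℝ) : ℕ :=
  sInf {m : ℕ | ∀ S : Finset (Fin N), S.card = m → (colSub n N x S).rank = n}

/-- Noise-free data, `rank X = n`, and
`|{t : f_t = 0}| ≥ (N + ν_n(X)) / 2` imply that `θ^o` is the unique minimizer
of the ℓ0 objective. -/
theorem stmt1 (n N : ℕ) (hn : 1 ≤ n) (hN : 1 ≤ N)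
    (x : Fin N → Fin n → ℝ) (y : Fin N → ℝ)
    (θo : Fin n → ℝ) (f : Fin N → ℝ)
    (hrank : (Matrix.of fun i t => x t i : Matrix (Fin n) (Fin N) ℝ).rank = n)
    (hdata : ∀ t, y t = x t ⬝ᵥ θo + f t)
    (hcard : (((univ.filter (fun t => f t = 0)).card : ℝ)) ≥ ((N : ℝ) + (nuX n N x : ℝ)) / 2) :
    ∀ θ : Fin n → ℝ, θ ≠ θo →
      (univ.filter (fun t => y t - x t ⬝ᵥ θo ≠ 0)).card <
        (univ.filter (fun t => y t - x t ⬝ᵥ θ ≠ 0)).card := by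
  intro θ hθ
  classical
  set d : Fin n → ℝ := fun i => θo i - θ i with hd
  have hd0 : d ≠ 0 := by
    intro h
    apply hθ
    funext i
    have := congrFun h i
    simp only [hd, Pi.zero_apply] at this
    linarith
  -- N is in the defining set of nuX
  have hNmem : N ∈ {m : ℕ | ∀ S : Finset (Fin N), S.card = m → (colSub n N x S).rank = n} := by
    intro S hS
    have hSuniv : S = univ := Finset.eq_univ_of_card S (by simpa using hS)
    subst hSuniv
    have he : colSub n N x univ =
        (Matrix.of fun i t => x t i : Matrix (Fin n) (Fin N) ℝ).submatrix id
          (Subtype.val : {t // t ∈ (univ : Finset (Fin N))} → Fin N) := rfl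
    have hr : Set.range ((Matrix.of fun i t => x t i : Matrix (Fin n) (Fin N) ℝ).submatrix id
          (Subtype.val : {t // t ∈ (univ : Finset (Fin N))} → Fin N)).col
        = Set.range (Matrix.of fun i t => x t i : Matrix (Fin n) (Fin N) ℝ).col := by
      ext v
      constructor
      · rintro ⟨t, rfl⟩; exact ⟨t.1, rfl⟩
      · rintro ⟨t, rfl⟩; exact ⟨⟨t, Finset.mem_univ t⟩, rfl⟩
    rw [he, Matrix.rank_eq_finrank_span_cols, hr, ← Matrix.rank_eq_finrank_span_cols, hrank]
  have hne : {m : ℕ | ∀ S : Finset (Fin N), S.card = m → (colSub n N x S).rank = n}.Nonempty :=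
    ⟨N, hNmem⟩
  have hν : ∀ S : Finset (Fin N), S.card = nuX n N x → (colSub n N x S).rank = n :=
    Nat.sInf_mem hne
  have hνleN : nuX n N x ≤ N := Nat.sInf_le hNmem
  -- the set A where x t ⬝ d = 0 has card < nuX
  have hA : (univ.filter (fun t => x t ⬝ᵥ d = 0)).card < nuX n N x := by
    by_contra hcon
    push_neg at hcon
    obtain ⟨S, hSsub, hScard⟩ :=
      Finset.exists_subset_card_eq (s := univ.filter (fun t => x t ⬝ᵥ d = 0)) (n := nuX n N x) hcon
    have hrankS : (colSub n N x S).rank = n := hν S hScard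
    -- d is in the kernel of (colSub S)ᵀ
    have hker : (colSub n N x S)ᵀ.mulVecLin d = 0 := by
      funext t
      have ht : x t.1 ⬝ᵥ d = 0 := by
        have := hSsub t.2
        simpa using this
      simpa [Matrix.mulVecLin_apply, Matrix.mulVec, Matrix.transpose, colSub, dotProduct] using ht
    have hker' : d ∈ LinearMap.ker (colSub n N x S)ᵀ.mulVecLin := hker
    have hkpos : 0 < Module.finrank ℝ (LinearMap.ker (colSub n N x S)ᵀ.mulVecLin) := by
      rw [Module.finrank_pos_iff_exists_ne_zero]
      exact ⟨⟨d, hker'⟩, by simpa using hd0⟩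
    have hsum := LinearMap.finrank_range_add_finrank_ker (colSub n N x S)ᵀ.mulVecLin
    have hdom : Module.finrank ℝ (Fin n → ℝ) = n := by simp
    rw [hdom] at hsum
    have : (colSub n N x S)ᵀ.rank < n := by
      have : (colSub n N x S)ᵀ.rank = Module.finrank ℝ (LinearMap.range (colSub n N x S)ᵀ.mulVecLin) := rfl
      omega
    rw [Matrix.rank_transpose, hrankS] at this
    omega
  -- rewrite errors
  have hzo : ∀ t, y t - x t ⬝ᵥ θo = f t := by intro t; rw [hdata]; ring
  have hzθ : ∀ t, y t - x t ⬝ᵥ θ = f t + x t ⬝ᵥ d := by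
    intro t
    rw [hdata]
    have : x t ⬝ᵥ d = x t ⬝ᵥ θo - x t ⬝ᵥ θ := by
      simp [hd, dotProduct, mul_sub, Finset.sum_sub_distrib]
    rw [this]; ring
  have e1 : (univ.filter (fun t => y t - x t ⬝ᵥ θo ≠ 0)) = univ.filter (fun t => ¬ f t = 0) := by
    apply Finset.filter_congr; intro t _; simp [hzo t]
  have e2 : (univ.filter (fun t => y t - x t ⬝ᵥ θ ≠ 0)) =
      univ.filter (fun t => ¬ (f t + x t ⬝ᵥ d = 0)) := by
    apply Finset.filter_congr; intro t _; simp [hzθ t]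
  rw [e1, e2]
  have c1 : (univ.filter (fun t => f t = 0)).card + (univ.filter (fun t => ¬ f t = 0)).card = N := by
    rw [Finset.card_filter_add_card_filter_not]; simp
  have c2 : (univ.filter (fun t => f t + x t ⬝ᵥ d = 0)).card +
      (univ.filter (fun t => ¬ (f t + x t ⬝ᵥ d = 0))).card = N := by
    rw [Finset.card_filter_add_card_filter_not]; simp
  have hsub : (univ.filter (fun t => f t + x t ⬝ᵥ d = 0)) ⊆
      (univ.filter (fun t => x t ⬝ᵥ d = 0)) ∪ (univ.filter (fun t => ¬ f t = 0)) := by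
    intro t ht
    simp only [Finset.mem_filter, Finset.mem_univ, true_and] at ht
    simp only [Finset.mem_union, Finset.mem_filter, Finset.mem_univ, true_and]
    by_cases hf : f t = 0
    · left; rw [hf] at ht; linarith
    · right; exact hf
  have c3 : (univ.filter (fun t => f t + x t ⬝ᵥ d = 0)).card ≤
      (univ.filter (fun t => x t ⬝ᵥ d = 0)).card + (univ.filter (fun t => ¬ f t = 0)).card :=
    le_trans (Finset.card_le_card hsub) (Finset.card_union_le _ _)
  have c5 : N + nuX n N x ≤ 2 * (univ.filter (fun t => f t = 0)).card := by
    have : ((N : ℝ) + (nuX n N x : ℝ)) ≤ 2 * ((univ.filter (fun t => f t = 0)).card : ℝ) := by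
      linarith
    exact_mod_cast this
  omega
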